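/- The monoid SL(2,ℕ) of 2×2 integer matrices with nonnegative entries and determinant 1 is freely generated by the matrices L = [[1,0],[1,1]] and R = [[1,1],[0,1]]: every matrix in SL(2,ℕ) admits a unique factorization as a finite product of L's and R's. -/
import Mathlib

namespace Sl2Free

noncomputable def Lm : Matrix (Fin 2) (Fin 2) ℤ := !![1,0;1,1]
noncomputable def Rm : Matrix (Fin 2) (Fin 2) ℤ := !![1,1;0,1]

noncomputable def pw (w : List Bool) : Matrix (Fin 2) (Fin 2) ℤ :=
  (w.map (fun b => if b then Lm else Rm)).prod

lemma pw_nil : pw [] = 1 := rfl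

lemma pw_cons (b : Bool) (w : List Bool) :
    pw (b :: w) = (if b then Lm else Rm) * pw w := by
  simp [pw]

lemma pw_cons_true (w : List Bool) : pw (true :: w) = !![1,0;1,1] * pw w := by
  rw [pw_cons]; simp [Lm]

lemma pw_cons_false (w : List Bool) : pw (false :: w) = !![1,1;0,1] * pw w := by
  rw [pw_cons]; simp [Rm]

lemma pw_det (w : List Bool) : (pw w).det = 1 := by
  induction w with
  | nil => simp [pw_nil]
  | cons b w ih =>
    rw [pw_cons, Matrix.det_mul, ih, mul_one]
    cases b <;> simp [Lm, Rm, Matrix.det_fin_two_of]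

lemma pw_pos (w : List Bool) : ∀ i j, 0 ≤ pw w i j := by
  induction w with
  | nil => intro i j; fin_cases i <;> fin_cases j <;> simp [pw_nil, Matrix.one_apply]
  | cons b w ih =>
    intro i j
    have h00 := ih 0 0; have h01 := ih 0 1; have h10 := ih 1 0; have h11 := ih 1 1
    rw [pw_cons]
    cases b <;> fin_cases i <;> fin_cases j <;>
      simp [Lm, Rm, Matrix.mul_apply, Fin.sum_univ_two] <;> omega

lemma pw_ne_one (b : Bool) (w : List Bool) : pw (b :: w) ≠ 1 := by
  intro h
  have hdet := pw_det w
  rw [Matrix.det_fin_two] at hdet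
  have h00 := pw_pos w 0 0; have h01 := pw_pos w 0 1
  have h10 := pw_pos w 1 0; have h11 := pw_pos w 1 1
  rw [pw_cons] at h
  cases b
  · -- R * P = 1 ; entry (0,1): P01 + P11 = 0
    have := congrFun (congrFun h 0) 1
    simp [Rm, Matrix.mul_apply, Fin.sum_univ_two, Matrix.one_apply] at this
    have hq : pw w 0 1 = 0 ∧ pw w 1 1 = 0 := by omega
    rw [hq.1, hq.2] at hdet; simp at hdet
  · -- L * P = 1 ; entry (1,0): P00 + P10 = 0
    have := congrFun (congrFun h 1) 0
    simp [Lm, Matrix.mul_apply, Fin.sum_univ_two, Matrix.one_apply] at this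
    have hq : pw w 0 0 = 0 ∧ pw w 1 0 = 0 := by omega
    rw [hq.1, hq.2] at hdet; simp at hdet

lemma not_L_eq_R (w1 w2 : List Bool) : Lm * pw w1 ≠ Rm * pw w2 := by
  intro h
  have hdet := pw_det w2
  rw [Matrix.det_fin_two] at hdet
  have p00 := pw_pos w1 0 0
  have p10 := pw_pos w1 1 0
  have p01 := pw_pos w1 0 1
  have p11 := pw_pos w1 1 1
  have q00 := pw_pos w2 0 0
  have q01 := pw_pos w2 0 1
  have e00 := congrFun (congrFun h 0) 0
  have e10 := congrFun (congrFun h 1) 0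
  have e01 := congrFun (congrFun h 0) 1
  have e11 := congrFun (congrFun h 1) 1
  simp [Lm, Rm, Matrix.mul_apply, Fin.sum_univ_two] at e00 e10 e01 e11
  have hq00 : pw w2 0 0 = 0 := by omega
  have hq01 : pw w2 0 1 = 0 := by omega
  rw [hq00, hq01] at hdet; simp at hdet

lemma L_cancel {A B : Matrix (Fin 2) (Fin 2) ℤ} (h : Lm * A = Lm * B) : A = B := by
  have : !![1,0;-1,1] * Lm = 1 := by
    rw [Matrix.one_fin_two, Lm, Matrix.mul_fin_two]; norm_num
  calc A = (!![1,0;-1,1] * Lm) * A := by rw [this, one_mul]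
    _ = !![1,0;-1,1] * (Lm * A) := by rw [mul_assoc]
    _ = !![1,0;-1,1] * (Lm * B) := by rw [h]
    _ = (!![1,0;-1,1] * Lm) * B := by rw [mul_assoc]
    _ = B := by rw [this, one_mul]

lemma R_cancel {A B : Matrix (Fin 2) (Fin 2) ℤ} (h : Rm * A = Rm * B) : A = B := by
  have : !![1,-1;0,1] * Rm = 1 := by
    rw [Matrix.one_fin_two, Rm, Matrix.mul_fin_two]; norm_num
  calc A = (!![1,-1;0,1] * Rm) * A := by rw [this, one_mul]
    _ = !![1,-1;0,1] * (Rm * A) := by rw [mul_assoc]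
    _ = !![1,-1;0,1] * (Rm * B) := by rw [h]
    _ = (!![1,-1;0,1] * Rm) * B := by rw [mul_assoc]
    _ = B := by rw [this, one_mul]

lemma pw_inj : ∀ w1 w2 : List Bool, pw w1 = pw w2 → w1 = w2 := by
  intro w1
  induction w1 with
  | nil =>
    intro w2 h
    cases w2 with
    | nil => rfl
    | cons b w2 => exact absurd h.symm (by rw [pw_nil]; exact pw_ne_one b w2)
  | cons b1 w1 ih =>
    intro w2 h
    cases w2 with
    | nil => exact absurd h (by rw [pw_nil]; exact pw_ne_one b1 w1)
    | cons b2 w2 =>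
      rw [pw_cons, pw_cons] at h
      cases b1 <;> cases b2 <;> simp at h
      · rw [ih w2 (R_cancel h)]
      · exact absurd h.symm (not_L_eq_R w2 w1)
      · exact absurd h (not_L_eq_R w1 w2)
      · rw [ih w2 (L_cancel h)]

lemma exists_word : ∀ n : ℕ, ∀ a b c d : ℤ, 0 ≤ a → 0 ≤ b → 0 ≤ c → 0 ≤ d →
    a * d - b * c = 1 → (a + b + c + d).toNat = n →
    ∃ w : List Bool, pw w = !![a,b;c,d] := by
  intro n
  induction n using Nat.strong_induction_on with
  | _ n ih =>
    intro a b c d ha hb hc hd hdet hn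
    by_cases hone : a = 1 ∧ b = 0 ∧ c = 0 ∧ d = 1
    · obtain ⟨h1, h2, h3, h4⟩ := hone
      refine ⟨[], ?_⟩
      rw [pw_nil, h1, h2, h3, h4, Matrix.one_fin_two]
    · rcases le_or_gt c a with h1 | h1 <;> rcases le_or_gt d b with h2 | h2
      · -- R case : M = R * !![a-c, b-d; c, d]
        have hcd : 0 < c + d := by
          rcases lt_or_ge 0 (c + d) with h | h
          · exact h
          · exfalso; have : c = 0 ∧ d = 0 := by omega
            rw [this.1, this.2] at hdet; simp at hdet
        obtain ⟨w, hw⟩ := ih ((a - c + (b - d) + c + d).toNat) (by omega)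
          (a - c) (b - d) c d (by omega) (by omega) hc hd (by ring_nf; ring_nf at hdet; linarith) rfl
        refine ⟨false :: w, ?_⟩
        rw [pw_cons_false, hw, Matrix.mul_fin_two]
        congr 1 <;> ring
      · -- c ≤ a, b < d : forces identity or L-reducible with a ≤ c i.e. a = c?
        -- show b + c = 0 hence identity, contradiction... unless a = c allows L
        rcases le_or_gt a c with h3 | h3
        · -- L case
          have hab : 0 < a + b := by
            rcases lt_or_ge 0 (a + b) with h | h
            · exact h
            · exfalso; have : a = 0 ∧ b = 0 := by omega
              rw [this.1, this.2] at hdet; simp at hdet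
          obtain ⟨w, hw⟩ := ih ((a + b + (c - a) + (d - b)).toNat) (by omega)
            a b (c - a) (d - b) ha hb (by omega) (by omega) (by ring_nf; ring_nf at hdet; linarith) rfl
          refine ⟨true :: w, ?_⟩
          rw [pw_cons_true, hw, Matrix.mul_fin_two]
          congr 1 <;> ring
        · -- c < a, b < d : det ≥ b + c + 1, forces b = c = 0, a*d = 1, identity
          exfalso
          have h4 : a * d ≥ (b + 1) * (c + 1) := by nlinarith
          have hb0 : b = 0 := by nlinarith
          have hc0 : c = 0 := by nlinarith
          rw [hb0, hc0] at hdet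
          simp at hdet
          have ha1 : 1 ≤ a := by
            rcases (by omega : a = 0 ∨ 1 ≤ a) with h | h
            · rw [h] at hdet; simp at hdet
            · exact h
          have hd1 : 1 ≤ d := by
            rcases (by omega : d = 0 ∨ 1 ≤ d) with h | h
            · rw [h] at hdet; simp at hdet
            · exact h
          have haa : a = 1 := by nlinarith
          have hdd : d = 1 := by nlinarith
          exact hone ⟨haa, hb0, hc0, hdd⟩
      · -- a < c, d ≤ b : contradiction: det < 0
        exfalso; nlinarith
      · -- L case : a < c, b < d
        have hab : 0 < a + b := by
          rcases lt_or_ge 0 (a + b) with h | h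
          · exact h
          · exfalso; have : a = 0 ∧ b = 0 := by omega
            rw [this.1, this.2] at hdet; simp at hdet
        obtain ⟨w, hw⟩ := ih ((a + b + (c - a) + (d - b)).toNat) (by omega)
          a b (c - a) (d - b) ha hb (by omega) (by omega) (by ring_nf; ring_nf at hdet; linarith) rfl
        refine ⟨true :: w, ?_⟩
        rw [pw_cons_true, hw, Matrix.mul_fin_two]
        congr 1 <;> ring

end Sl2Free

/-- `SL(2,ℕ)` is freely generated by `L = [[1,0],[1,1]]` and `R = [[1,1],[0,1]]`:
every nonnegative unimodular 2×2 integer matrix admits a unique factorization as a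
finite product of `L`'s and `R`'s. -/
theorem sl2_nat_free (M : Matrix (Fin 2) (Fin 2) ℤ)
    (hpos : ∀ i j, 0 ≤ M i j) (hdet : M.det = 1) :
    ∃! w : List Bool,
      (w.map (fun b => if b then (!![1,0;1,1] : Matrix (Fin 2) (Fin 2) ℤ)
        else (!![1,1;0,1] : Matrix (Fin 2) (Fin 2) ℤ))).prod = M := by
  rw [Matrix.det_fin_two] at hdet
  obtain ⟨w, hw⟩ := Sl2Free.exists_word (M 0 0 + M 0 1 + M 1 0 + M 1 1).toNat
    (M 0 0) (M 0 1) (M 1 0) (M 1 1) (hpos 0 0) (hpos 0 1) (hpos 1 0) (hpos 1 1) hdet rfl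
  refine ⟨w, ?_, ?_⟩
  · show Sl2Free.pw w = M
    rw [hw]; exact (Matrix.eta_fin_two M).symm
  · intro w' hw'
    apply Sl2Free.pw_inj
    show Sl2Free.pw w' = Sl2Free.pw w
    rw [hw]
    exact hw'.trans (Matrix.eta_fin_two M)
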